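/- Let α > 1, β ≥ 0, and let G be an infinite matrix over ℤ×ℤ with |G_{jk}| ≤ 3 c_v e^{-β|j-k|} / ((⟨j⟩+⟨k⟩) ⟨j-k⟩^α). Then for every n ≥ 2, the matrix power G^n satisfies |(G^n)_{jk}| ≤ (3c_v)^n c_α^{n-1} e^{-β|j-k|} / (⟨j⟩ ⟨k⟩ ⟨j-k⟩^α), where c_α is the constant from the convolution inequality ∑_{s∈ℤ} e^{-β|j-s|-β|s-k|}/(⟨j-s⟩^α ⟨s-k⟩^α) ≤ c_α e^{-β|j-k|}/⟨j-k⟩^α. -/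

import Mathlib

/-- ⟨k⟩ = |k| + 1 -/
noncomputable def br (k : ℤ) : ℝ := |(k : ℝ)| + 1

lemma one_le_br (k : ℤ) : 1 ≤ br k := by
  unfold br
  have := abs_nonneg ((k:ℝ))
  linarith

lemma br_pos (k : ℤ) : 0 < br k := lt_of_lt_of_le one_pos (one_le_br k)

lemma one_le_br_rpow (k : ℤ) {α : ℝ} (hα : 0 ≤ α) : 1 ≤ br k ^ α := by
  calc (1:ℝ) = 1 ^ α := (Real.one_rpow α).symm
  _ ≤ br k ^ α := Real.rpow_le_rpow zero_le_one (one_le_br k) hα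

lemma summable_br_rpow {α : ℝ} (hα : 1 < α) :
    Summable (fun s : ℤ => (br s ^ α)⁻¹) := by
  have hnat : Summable (fun n : ℕ => (((n : ℝ) + 1) ^ α)⁻¹) := by
    have h0 : Summable (fun n : ℕ => 1 / (n : ℝ) ^ α) :=
      Real.summable_one_div_nat_rpow.mpr hα
    have := (summable_nat_add_iff 1).mpr h0
    simpa [one_div] using this.congr (fun n => by push_cast; ring_nf)
  apply Summable.of_nat_of_neg
  · refine hnat.congr fun n => ?_
    unfold br
    norm_num
  · refine hnat.congr fun n => ?_
    unfold br
    simp [abs_of_nonneg (by positivity : (0:ℝ) ≤ (n:ℝ))]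

lemma summable_main {α β : ℝ} (hα : 1 < α) (hβ : 0 ≤ β) (j k : ℤ) :
    Summable (fun s : ℤ =>
      Real.exp (-β * |((j - s : ℤ) : ℝ)| - β * |((s - k : ℤ) : ℝ)|) /
        (br (j - s) ^ α * br (s - k) ^ α)) := by
  have hs : Summable (fun s : ℤ => (br (s - k) ^ α)⁻¹) :=
    (summable_br_rpow hα).comp_injective (sub_left_injective (b := k))
  refine hs.of_nonneg_of_le (fun s => ?_) (fun s => ?_)
  · have h1 : (0:ℝ) < br (j - s) ^ α := Real.rpow_pos_of_pos (br_pos _) _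
    have h2 : (0:ℝ) < br (s - k) ^ α := Real.rpow_pos_of_pos (br_pos _) _
    positivity
  have he : Real.exp (-β * |((j - s : ℤ) : ℝ)| - β * |((s - k : ℤ) : ℝ)|) ≤ 1 := by
    apply Real.exp_le_one_iff.mpr
    have h1 : (0:ℝ) ≤ |((j - s : ℤ) : ℝ)| := abs_nonneg _
    have h2 : (0:ℝ) ≤ |((s - k : ℤ) : ℝ)| := abs_nonneg _
    nlinarith
  have hb1 : 1 ≤ br (j - s) ^ α := one_le_br_rpow _ (le_of_lt (lt_trans one_pos hα))
  have hb2 : (0:ℝ) < br (s - k) ^ α := by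
    have := br_pos (s - k); positivity
  rw [div_le_iff₀ (by positivity)]
  calc Real.exp (-β * |((j - s : ℤ) : ℝ)| - β * |((s - k : ℤ) : ℝ)|) ≤ 1 := he
  _ = (br (s-k)^α)⁻¹ * br (s-k)^α := by field_simp
  _ ≤ (br (s-k)^α)⁻¹ * (br (j-s)^α * br (s-k)^α) := by
      rw [mul_comm (br (j-s)^α)]
      have : br (s-k)^α ≤ br (s-k)^α * br (j-s)^α := le_mul_of_one_le_right (le_of_lt hb2) hb1
      exact mul_le_mul_of_nonneg_left this (by positivity)

lemma step_bound (α β cv cα : ℝ) (hα : 1 < α) (hβ : 0 ≤ β) (hcv : 0 < cv)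
    (hcα0 : 0 ≤ cα)
    (G : ℤ → ℤ → ℂ)
    (hG : ∀ j k : ℤ, ‖G j k‖ ≤ 3 * cv * Real.exp (-β * |((j - k : ℤ) : ℝ)|) /
      ((br j + br k) * br (j - k) ^ α))
    (hcα : ∀ j k : ℤ,
      ∑' s : ℤ, Real.exp (-β * |((j - s : ℤ) : ℝ)| - β * |((s - k : ℤ) : ℝ)|) /
          (br (j - s) ^ α * br (s - k) ^ α)
        ≤ cα * Real.exp (-β * |((j - k : ℤ) : ℝ)|) / br (j - k) ^ α)
    (A : ℤ → ℂ) (C : ℝ) (hC : 0 ≤ C) (j k : ℤ) (D : ℤ → ℝ) (hD0 : ∀ s, 0 < D s)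
    (hD : ∀ s, br j * br k ≤ D s * (br s + br k))
    (hA : ∀ s, ‖A s‖ ≤ C * Real.exp (-β * |((j - s : ℤ) : ℝ)|) / (D s * br (j - s) ^ α)) :
    ‖∑' s : ℤ, A s * G s k‖ ≤
      C * (3 * cv) * cα * Real.exp (-β * |((j - k : ℤ) : ℝ)|) /
        (br j * br k * br (j - k) ^ α) := by
  have hαpos : (0:ℝ) ≤ α := le_of_lt (lt_trans one_pos hα)
  set f : ℤ → ℝ := fun s =>
    Real.exp (-β * |((j - s : ℤ) : ℝ)| - β * |((s - k : ℤ) : ℝ)|) /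
      (br (j - s) ^ α * br (s - k) ^ α) with hf_def
  have hf : Summable f := summable_main hα hβ j k
  have hbjk : (0:ℝ) < br j * br k := mul_pos (br_pos j) (br_pos k)
  have key : ∀ s, ‖A s * G s k‖ ≤ (C * (3 * cv) / (br j * br k)) * f s := by
    intro s
    have hb1 : (0:ℝ) < br (j - s) ^ α := Real.rpow_pos_of_pos (br_pos _) _
    have hb2 : (0:ℝ) < br (s - k) ^ α := Real.rpow_pos_of_pos (br_pos _) _
    have hbs : (0:ℝ) < br s + br k := by have := br_pos s; have := br_pos k; linarith
    have hexp : Real.exp (-β * |((j - s : ℤ) : ℝ)| - β * |((s - k : ℤ) : ℝ)|)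
        = Real.exp (-β * |((j - s : ℤ) : ℝ)|) * Real.exp (-β * |((s - k : ℤ) : ℝ)|) := by
      rw [← Real.exp_add]; ring_nf
    rw [norm_mul]
    calc ‖A s‖ * ‖G s k‖
        ≤ (C * Real.exp (-β * |((j - s : ℤ) : ℝ)|) / (D s * br (j - s) ^ α)) *
          (3 * cv * Real.exp (-β * |((s - k : ℤ) : ℝ)|) / ((br s + br k) * br (s - k) ^ α)) := by
          apply mul_le_mul (hA s) (hG s k) (norm_nonneg _) ?_
          have h0 := hD0 s
          positivity
      _ = (C * (3 * cv) * (Real.exp (-β * |((j - s : ℤ) : ℝ)|) *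
            Real.exp (-β * |((s - k : ℤ) : ℝ)|))) /
            ((D s * (br s + br k)) * (br (j - s) ^ α * br (s - k) ^ α)) := by
          rw [div_mul_div_comm]; ring_nf
      _ ≤ (C * (3 * cv) * (Real.exp (-β * |((j - s : ℤ) : ℝ)|) *
            Real.exp (-β * |((s - k : ℤ) : ℝ)|))) /
            ((br j * br k) * (br (j - s) ^ α * br (s - k) ^ α)) := by
          apply div_le_div_of_nonneg_left (by positivity) (by positivity)
          exact mul_le_mul_of_nonneg_right (hD s) (by positivity)
      _ = (C * (3 * cv) / (br j * br k)) * f s := by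
          simp only [hf_def, hexp, div_mul_div_comm]
          try ring
  have hsumf : Summable (fun s => (C * (3 * cv) / (br j * br k)) * f s) := hf.mul_left _
  have hAG : Summable (fun s => ‖A s * G s k‖) :=
    hsumf.of_nonneg_of_le (fun s => norm_nonneg _) key
  calc ‖∑' s : ℤ, A s * G s k‖ ≤ ∑' s, ‖A s * G s k‖ := norm_tsum_le_tsum_norm hAG
    _ ≤ ∑' s, (C * (3 * cv) / (br j * br k)) * f s := Summable.tsum_le_tsum key hAG hsumf
    _ = (C * (3 * cv) / (br j * br k)) * ∑' s, f s := tsum_mul_left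
    _ ≤ (C * (3 * cv) / (br j * br k)) *
        (cα * Real.exp (-β * |((j - k : ℤ) : ℝ)|) / br (j - k) ^ α) := by
        exact mul_le_mul_of_nonneg_left (hcα j k) (by positivity)
    _ = C * (3 * cv) * cα * Real.exp (-β * |((j - k : ℤ) : ℝ)|) /
        (br j * br k * br (j - k) ^ α) := by
        have hb : (0:ℝ) < br (j - k) ^ α := Real.rpow_pos_of_pos (br_pos _) _
        field_simp

theorem Gn_bound (α β cv cα : ℝ) (hα : 1 < α) (hβ : 0 ≤ β) (hcv : 0 < cv)
    (G : ℤ → ℤ → ℂ)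
    (hG : ∀ j k : ℤ, ‖G j k‖ ≤ 3 * cv * Real.exp (-β * |((j - k : ℤ) : ℝ)|) /
      ((br j + br k) * br (j - k) ^ α))
    (hcα : ∀ j k : ℤ,
      ∑' s : ℤ, Real.exp (-β * |((j - s : ℤ) : ℝ)| - β * |((s - k : ℤ) : ℝ)|) /
          (br (j - s) ^ α * br (s - k) ^ α)
        ≤ cα * Real.exp (-β * |((j - k : ℤ) : ℝ)|) / br (j - k) ^ α)
    (P : ℕ → ℤ → ℤ → ℂ)
    (hP1 : ∀ j k, P 1 j k = G j k)
    (hPsucc : ∀ n j k, P (n + 1) j k = ∑' s : ℤ, P n j s * G s k) :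
    ∀ n : ℕ, 2 ≤ n → ∀ j k : ℤ,
      ‖P n j k‖ ≤ (3 * cv) ^ n * cα ^ (n - 1) * Real.exp (-β * |((j - k : ℤ) : ℝ)|) /
        (br j * br k * br (j - k) ^ α) := by
  -- first: cα ≥ 0
  have hcα0 : 0 ≤ cα := by
    have h00 := hcα 0 0
    have hns : 0 ≤ ∑' s : ℤ, Real.exp (-β * |((0 - s : ℤ) : ℝ)| - β * |((s - 0 : ℤ) : ℝ)|) /
        (br (0 - s) ^ α * br (s - 0) ^ α) := by
      refine tsum_nonneg (fun s => ?_)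
      have h1 : (0:ℝ) < br (0 - s) ^ α := Real.rpow_pos_of_pos (br_pos _) _
      have h2 : (0:ℝ) < br (s - 0) ^ α := Real.rpow_pos_of_pos (br_pos _) _
      positivity
    have hbr0 : br (0 - 0) = 1 := by unfold br; norm_num
    rw [hbr0, Real.one_rpow] at h00
    simp only [sub_self, Int.cast_zero, abs_zero, mul_zero, neg_zero, Real.exp_zero] at h00
    linarith
  intro n hn
  induction n, hn using Nat.le_induction with
  | base =>
    intro j k
    have h2 : P 2 j k = ∑' s : ℤ, G j s * G s k := by
      rw [show (2:ℕ) = 1 + 1 from rfl, hPsucc 1 j k]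
      simp only [hP1]
    rw [h2]
    have := step_bound α β cv cα hα hβ hcv hcα0 G hG hcα (fun s => G j s) (3 * cv)
      (by positivity) j k (fun s => br j + br s)
      (fun s => by show (0:ℝ) < br j + br s; have := br_pos j; have := br_pos s; linarith)
      (fun s => by
        show br j * br k ≤ (br j + br s) * (br s + br k)
        nlinarith [br_pos j, br_pos s, br_pos k, one_le_br s])
      (fun s => hG j s)
    calc ‖∑' s : ℤ, G j s * G s k‖
        ≤ 3 * cv * (3 * cv) * cα * Real.exp (-β * |((j - k : ℤ) : ℝ)|) /
          (br j * br k * br (j - k) ^ α) := this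
      _ = (3 * cv) ^ 2 * cα ^ (2 - 1) * Real.exp (-β * |((j - k : ℤ) : ℝ)|) /
          (br j * br k * br (j - k) ^ α) := by norm_num; ring
  | succ n hn ih =>
    intro j k
    obtain ⟨m, rfl⟩ : ∃ m, n = m + 2 := ⟨n - 2, by omega⟩
    rw [hPsucc (m + 2) j k]
    have := step_bound α β cv cα hα hβ hcv hcα0 G hG hcα (fun s => P (m + 2) j s)
      ((3 * cv) ^ (m + 2) * cα ^ (m + 2 - 1)) (by positivity) j k
      (fun s => br j * br s)
      (fun s => mul_pos (br_pos j) (br_pos s))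
      (fun s => by
        show br j * br k ≤ br j * br s * (br s + br k)
        nlinarith [mul_nonneg (mul_nonneg (br_pos j).le (br_pos s).le) (br_pos s).le,
          mul_nonneg (mul_nonneg (br_pos j).le (br_pos k).le)
            (sub_nonneg.mpr (one_le_br s))])
      (fun s => ih j s)
    calc ‖∑' s : ℤ, P (m + 2) j s * G s k‖
        ≤ (3 * cv) ^ (m + 2) * cα ^ (m + 2 - 1) * (3 * cv) * cα *
            Real.exp (-β * |((j - k : ℤ) : ℝ)|) / (br j * br k * br (j - k) ^ α) := this
      _ = (3 * cv) ^ (m + 2 + 1) * cα ^ (m + 2 + 1 - 1) *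
            Real.exp (-β * |((j - k : ℤ) : ℝ)|) / (br j * br k * br (j - k) ^ α) := by
          norm_num
          ring
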